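/- For every integer n ≥ 5, the Kneser graph K(n,2) is P_6-induced-saturated: K(n,2) contains no induced subgraph isomorphic to the path on 6 vertices, for every edge e of K(n,2) the graph K(n,2)−e contains an induced subgraph isomorphic to the path on 6 vertices, and for every non-edge e of K(n,2) the graph K(n,2)+e contains an induced subgraph isomorphic to the path on 6 vertices. -/

import Mathlib

open SimpleGraph

/-- The Kneser graph `K(n,2)`: vertices are the 2-element subsets of `{1,…,n}`,
adjacent iff disjoint. -/
def kneser (n : ℕ) : SimpleGraph {s : Finset (Fin n) // s.card = 2} where
  Adj u v := Disjoint u.1 v.1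
  symm := ⟨fun u v h => h.symm⟩
  loopless := by
    constructor
    intro u h
    have h0 : u.1 = ∅ := disjoint_self.mp h
    have h2 := u.2
    rw [h0] at h2
    simp at h2

/-- `G` is `H`-induced-saturated: `G` has no induced copy of `H`, removing any edge of `G`
creates an induced copy of `H`, and adding any non-edge of `G` creates an induced copy of `H`. -/
def InducedSaturated {V : Type*} {W : Type*} (G : SimpleGraph V) (H : SimpleGraph W) : Prop :=
  IsEmpty (H ↪g G) ∧
  (∀ u v : V, G.Adj u v → Nonempty (H ↪g G.deleteEdges {s(u, v)})) ∧
  (∀ u v : V, u ≠ v → ¬ G.Adj u v →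
    Nonempty (H ↪g (G ⊔ SimpleGraph.fromEdgeSet {s(u, v)})))

namespace KneserP6

abbrev K (n : ℕ) := {s : Finset (Fin n) // s.card = 2}

instance (n : ℕ) : DecidableRel (kneser n).Adj :=
  fun a b => inferInstanceAs (Decidable (Disjoint a.1 b.1))

lemma exists_other {n : ℕ} {s : Finset (Fin n)} (h2 : s.card = 2) {x : Fin n} (hx : x ∈ s) :
    ∃ y, y ≠ x ∧ s = {x, y} := by
  obtain ⟨a, b, hab, rfl⟩ := Finset.card_eq_two.mp h2
  rcases Finset.mem_insert.mp hx with rfl | hx'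
  · exact ⟨b, hab.symm, rfl⟩
  · rw [Finset.mem_singleton] at hx'
    subst hx'
    exact ⟨a, hab, Finset.pair_comm a x⟩

lemma eq_pair {n : ℕ} {s : Finset (Fin n)} (h2 : s.card = 2) {x y : Fin n}
    (hx : x ∈ s) (hy : y ∈ s) (hxy : x ≠ y) : s = {x, y} := by
  obtain ⟨y', hy'x, rfl⟩ := exists_other h2 hx
  rcases Finset.mem_insert.mp hy with rfl | hy'
  · exact absurd rfl hxy
  · rw [Finset.mem_singleton] at hy'
    subst hy'
    rfl

lemma no_induced_P6 (n : ℕ) : IsEmpty (pathGraph 6 ↪g kneser n) := by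
  constructor
  intro f
  set A : Fin 6 → Finset (Fin n) := fun i => (f i).1 with hA
  have hcard : ∀ i, (A i).card = 2 := fun i => (f i).2
  have hadj : ∀ i j : Fin 6, Disjoint (A i) (A j) ↔ ((i : ℕ) + 1 = j ∨ (j : ℕ) + 1 = i) := by
    intro i j
    have := f.map_rel_iff (a := i) (b := j)
    rw [pathGraph_adj] at this
    exact this
  have meet : ∀ i j : Fin 6, ¬((i : ℕ) + 1 = j ∨ (j : ℕ) + 1 = i) →
      ∃ x, x ∈ A i ∧ x ∈ A j := by
    intro i j h
    exact Finset.not_disjoint_iff.mp (fun hd => h ((hadj i j).mp hd))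
  have hne02 : A 0 ≠ A 2 := by
    intro h
    have : (0 : Fin 6) = 2 := f.injective (Subtype.ext h)
    exact absurd this (by decide)
  have hD01 : Disjoint (A 0) (A 1) := (hadj 0 1).mpr (by decide)
  have hD12 : Disjoint (A 1) (A 2) := (hadj 1 2).mpr (by decide)
  have hD23 : Disjoint (A 2) (A 3) := (hadj 2 3).mpr (by decide)
  have hD34 : Disjoint (A 3) (A 4) := (hadj 3 4).mpr (by decide)
  have hD45 : Disjoint (A 4) (A 5) := (hadj 4 5).mpr (by decide)
  -- the case where A0, A2, A4 share a common element leads to a contradiction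
  have common : ∀ x : Fin n, x ∈ A 0 → x ∈ A 2 → x ∈ A 4 → False := by
    intro x hx0 hx2 hx4
    obtain ⟨y, hyx, hA4⟩ := exists_other (hcard 4) hx4
    obtain ⟨t, ht1, ht4⟩ := meet 1 4 (by decide)
    have htx : t ≠ x := fun h => (Finset.disjoint_left.mp hD01 hx0) (h ▸ ht1)
    have hty : t = y := by
      rw [hA4] at ht4
      rcases Finset.mem_insert.mp ht4 with h | h
      · exact absurd h htx
      · exact Finset.mem_singleton.mp h
    subst hty
    obtain ⟨z, hzy, hA1⟩ := exists_other (hcard 1) ht1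
    obtain ⟨t2, ht2_1, ht2_5⟩ := meet 1 5 (by decide)
    have ht2y : t2 ≠ t := fun h => (Finset.disjoint_left.mp hD45
      (hA4 ▸ (Finset.mem_insert_of_mem (Finset.mem_singleton_self t)))) (h ▸ ht2_5)
    have ht2z : t2 = z := by
      rw [hA1] at ht2_1
      rcases Finset.mem_insert.mp ht2_1 with h | h
      · exact absurd h ht2y
      · exact Finset.mem_singleton.mp h
    rw [ht2z] at ht2_5
    obtain ⟨w, hw0, hw5⟩ := meet 0 5 (by decide)
    have hwx : w ≠ x := fun h => (Finset.disjoint_left.mp hD45 hx4) (h ▸ hw5)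
    have hwz : w ≠ z := by
      intro h
      have hz1 : z ∈ A 1 := hA1 ▸ Finset.mem_insert_of_mem (Finset.mem_singleton_self z)
      exact (Finset.disjoint_left.mp hD01 (h ▸ hw0)) hz1
    have hA5 : A 5 = {z, w} := eq_pair (hcard 5) ht2_5 hw5 (fun h => hwz h.symm)
    obtain ⟨v, hv2, hv5⟩ := meet 2 5 (by decide)
    have hvz : v ≠ z := by
      intro h
      have hz1 : z ∈ A 1 := hA1 ▸ Finset.mem_insert_of_mem (Finset.mem_singleton_self z)
      exact (Finset.disjoint_left.mp hD12 hz1) (h ▸ hv2)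
    have hvw : v = w := by
      rw [hA5] at hv5
      rcases Finset.mem_insert.mp hv5 with h | h
      · exact absurd h hvz
      · exact Finset.mem_singleton.mp h
    subst hvw
    have hA0' : A 0 = {x, v} := eq_pair (hcard 0) hx0 hw0 (fun h => hwx h.symm)
    have hA2' : A 2 = {x, v} := eq_pair (hcard 2) hx2 hv2 (fun h => hwx h.symm)
    exact hne02 (hA0'.trans hA2'.symm)
  obtain ⟨x, hx0, hx2⟩ := meet 0 2 (by decide)
  obtain ⟨y, hy2, hy4⟩ := meet 2 4 (by decide)
  obtain ⟨z, hz0, hz4⟩ := meet 0 4 (by decide)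
  by_cases hx4 : x ∈ A 4
  · exact common x hx0 hx2 hx4
  have hzx : z ≠ x := fun h => hx4 (h ▸ hz4)
  by_cases hzy : z = y
  · exact common y (hzy ▸ hz0) hy2 hy4
  have hxy : x ≠ y := fun h => hx4 (h ▸ hy4)
  have hA2 : A 2 = {x, y} := eq_pair (hcard 2) hx2 hy2 hxy
  have hA0 : A 0 = {x, z} := eq_pair (hcard 0) hx0 hz0 (fun h => hzx h.symm)
  have hA4 : A 4 = {y, z} := eq_pair (hcard 4) hy4 hz4 (fun h => hzy h.symm)
  obtain ⟨t, ht0, ht3⟩ := meet 0 3 (by decide)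
  rw [hA0] at ht0
  rcases Finset.mem_insert.mp ht0 with rfl | h
  · exact (Finset.disjoint_left.mp hD23 hx2) ht3
  · rw [Finset.mem_singleton] at h
    subst h
    exact (Finset.disjoint_right.mp hD34 hz4) ht3


def knMap {n : ℕ} (ι : Fin 5 ↪ Fin n) (s : K 5) : K n :=
  ⟨s.1.map ι, by rw [Finset.card_map]; exact s.2⟩

lemma knMap_inj {n : ℕ} (ι : Fin 5 ↪ Fin n) : Function.Injective (knMap ι) :=
  fun a b h => Subtype.ext (Finset.map_injective ι (congrArg Subtype.val h))

lemma knMap_adj {n : ℕ} (ι : Fin 5 ↪ Fin n) (a b : K 5) :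
    (kneser n).Adj (knMap ι a) (knMap ι b) ↔ (kneser 5).Adj a b :=
  Finset.disjoint_map ι

lemma knMap_sym2 {n : ℕ} (ι : Fin 5 ↪ Fin n) (a b c d : K 5) :
    s(knMap ι a, knMap ι b) = s(knMap ι c, knMap ι d) ↔ s(a, b) = s(c, d) := by
  simp [Sym2.eq_iff, (knMap_inj ι).eq_iff]

def embDel {n : ℕ} (ι : Fin 5 ↪ Fin n) (u0 v0 : K 5) :
    (kneser 5).deleteEdges {s(u0, v0)} ↪g
      (kneser n).deleteEdges {s(knMap ι u0, knMap ι v0)} where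
  toFun := knMap ι
  inj' := knMap_inj ι
  map_rel_iff' := by
    intro a b
    simp only [deleteEdges_adj, Set.mem_singleton_iff, Function.Embedding.coeFn_mk]
    rw [knMap_adj, knMap_sym2]

def embSup {n : ℕ} (ι : Fin 5 ↪ Fin n) (u0 v0 : K 5) :
    ((kneser 5) ⊔ fromEdgeSet {s(u0, v0)}) ↪g
      ((kneser n) ⊔ fromEdgeSet {s(knMap ι u0, knMap ι v0)}) where
  toFun := knMap ι
  inj' := knMap_inj ι
  map_rel_iff' := by
    intro a b
    simp only [sup_adj, fromEdgeSet_adj, Set.mem_singleton_iff, Function.Embedding.coeFn_mk]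
    rw [knMap_adj, knMap_sym2, (knMap_inj ι).ne_iff]

def p5 (a b : Fin 5) (h : a ≠ b := by decide) : K 5 := ⟨{a, b}, Finset.card_pair h⟩

def delPath : Fin 6 → K 5 := ![p5 0 1, p5 2 4, p5 0 3, p5 1 2, p5 0 4, p5 2 3]
def addPath : Fin 6 → K 5 := ![p5 0 1, p5 0 2, p5 1 3, p5 0 4, p5 1 2, p5 0 3]

def delEmb : pathGraph 6 ↪g (kneser 5).deleteEdges {s(p5 0 1, p5 2 3)} where
  toFun := delPath
  inj' := by decide
  map_rel_iff' := by
    intro a b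
    simp only [deleteEdges_adj, Set.mem_singleton_iff, pathGraph_adj]
    revert a b
    decide

def addEmb : pathGraph 6 ↪g ((kneser 5) ⊔ fromEdgeSet {s(p5 0 1, p5 0 2)}) where
  toFun := addPath
  inj' := by decide
  map_rel_iff' := by
    intro a b
    simp only [sup_adj, fromEdgeSet_adj, Set.mem_singleton_iff, pathGraph_adj]
    revert a b
    decide


lemma inj5 {α : Type*} {a b c d e : α} (h1 : a ≠ b) (h2 : a ≠ c) (h3 : a ≠ d) (h4 : a ≠ e)
    (h5 : b ≠ c) (h6 : b ≠ d) (h7 : b ≠ e) (h8 : c ≠ d) (h9 : c ≠ e) (h10 : d ≠ e) :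
    Function.Injective ![a, b, c, d, e] := by
  intro i j hij
  fin_cases i <;> fin_cases j <;> simp_all

lemma knMap_p5 {n : ℕ} (ι : Fin 5 ↪ Fin n) (a b : Fin 5) (h : a ≠ b) :
    (knMap ι (p5 a b h)).1 = {ι a, ι b} := by
  simp [knMap, p5]

end KneserP6

open KneserP6 in
/-- For every integer `n ≥ 5`, the Kneser graph `K(n,2)` is `P₆`-induced-saturated. -/
theorem kneser_P6_induced_saturated (n : ℕ) (hn : 5 ≤ n) :
    InducedSaturated (kneser n) (pathGraph 6) := by
  have hcardu : (Finset.univ : Finset (Fin n)).card = n := by simp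
  refine ⟨no_induced_P6 n, ?_, ?_⟩
  · intro u v huv
    have hdis : Disjoint u.1 v.1 := huv
    obtain ⟨a, b, hab, hu⟩ := Finset.card_eq_two.mp u.2
    obtain ⟨c, d, hcd, hv⟩ := Finset.card_eq_two.mp v.2
    have ha : a ∈ u.1 := by rw [hu]; simp
    have hb : b ∈ u.1 := by rw [hu]; simp
    have hc : c ∈ v.1 := by rw [hv]; simp
    have hd : d ∈ v.1 := by rw [hv]; simp
    have hmem : ∀ x, x ∈ u.1 → x ∉ v.1 := Finset.disjoint_left.mp hdis
    have hac : a ≠ c := fun h => hmem a ha (h ▸ hc)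
    have had : a ≠ d := fun h => hmem a ha (h ▸ hd)
    have hbc : b ≠ c := fun h => hmem b hb (h ▸ hc)
    have hbd : b ≠ d := fun h => hmem b hb (h ▸ hd)
    have h4 : ({a, b, c, d} : Finset (Fin n)).card ≤ 4 := by
      apply le_trans (Finset.card_insert_le _ _)
      have h3 : ({b, c, d} : Finset (Fin n)).card ≤ 3 := by
        apply le_trans (Finset.card_insert_le _ _)
        have h2 : ({c, d} : Finset (Fin n)).card ≤ 2 :=
          le_trans (Finset.card_insert_le _ _) (by simp)
        omega
      omega
    have hlt : ({a, b, c, d} : Finset (Fin n)).card < (Finset.univ : Finset (Fin n)).card := by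
      omega
    obtain ⟨e, -, he⟩ := Finset.not_subset.mp (fun hsub => absurd (Finset.card_le_card hsub) (not_le.mpr hlt))
    have he' : e ≠ a ∧ e ≠ b ∧ e ≠ c ∧ e ≠ d := by simpa using he
    obtain ⟨hea, heb, hec, hed⟩ := he'
    set ι : Fin 5 ↪ Fin n :=
      ⟨![a, b, c, d, e], inj5 hab hac had hea.symm hbc hbd heb.symm hcd hec.symm hed.symm⟩
      with hι
    have hι0 : ι 0 = a := rfl
    have hι1 : ι 1 = b := rfl
    have hι2 : ι 2 = c := rfl
    have hι3 : ι 3 = d := rfl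
    have h1 : knMap ι (p5 0 1) = u := by
      apply Subtype.ext
      rw [knMap_p5, hι0, hι1]
      exact hu.symm
    have h2 : knMap ι (p5 2 3) = v := by
      apply Subtype.ext
      rw [knMap_p5, hι2, hι3]
      exact hv.symm
    rw [← h1, ← h2]
    exact ⟨(embDel ι (p5 0 1) (p5 2 3)).comp delEmb⟩
  · intro u v hne hnadj
    have hnd : ¬ Disjoint u.1 v.1 := hnadj
    obtain ⟨a, hau, hav⟩ := Finset.not_disjoint_iff.mp hnd
    obtain ⟨b, hba, hu⟩ := exists_other u.2 hau
    obtain ⟨c, hca, hv⟩ := exists_other v.2 hav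
    have hbc : b ≠ c := fun h => hne (Subtype.ext (by rw [hu, hv, h]))
    have h3 : ({a, b, c} : Finset (Fin n)).card ≤ 3 := by
      apply le_trans (Finset.card_insert_le _ _)
      have h2 : ({b, c} : Finset (Fin n)).card ≤ 2 :=
        le_trans (Finset.card_insert_le _ _) (by simp)
      omega
    have hlt : 1 < ((Finset.univ : Finset (Fin n)) \ {a, b, c}).card := by
      rw [Finset.card_sdiff_of_subset (Finset.subset_univ _)]
      omega
    obtain ⟨d, hdm, e, hem, hde⟩ := Finset.one_lt_card.mp hlt
    have hd' : d ≠ a ∧ d ≠ b ∧ d ≠ c := by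
      have := (Finset.mem_sdiff.mp hdm).2
      simpa using this
    have he' : e ≠ a ∧ e ≠ b ∧ e ≠ c := by
      have := (Finset.mem_sdiff.mp hem).2
      simpa using this
    obtain ⟨hda, hdb, hdc⟩ := hd'
    obtain ⟨hea, heb, hec⟩ := he'
    set ι : Fin 5 ↪ Fin n :=
      ⟨![a, b, c, d, e], inj5 hba.symm hca.symm hda.symm hea.symm hbc hdb.symm heb.symm
        hdc.symm hec.symm hde⟩ with hι
    have hι0 : ι 0 = a := rfl
    have hι1 : ι 1 = b := rfl
    have hι2 : ι 2 = c := rfl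
    have h1 : knMap ι (p5 0 1) = u := by
      apply Subtype.ext
      rw [knMap_p5, hι0, hι1]
      exact hu.symm
    have h2 : knMap ι (p5 0 2) = v := by
      apply Subtype.ext
      rw [knMap_p5, hι0, hι2]
      exact hv.symm
    rw [← h1, ← h2]
    exact ⟨(embSup ι (p5 0 1) (p5 0 2)).comp addEmb⟩
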